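/- If a Monotonic Single-Source k-DTSN instance has a feasible solution of cost C, then the Directed Steiner Tree instance constructed by the layered reduction has a feasible solution of cost at most C. -/
import Mathlib


/-- Edges of the layered Directed Steiner Tree graph `G'` built from the temporal
directed graph with frames `E i`: a level-`i` copy `((u,i),(v,i))` of each edge
`(u,v) ∈ E i`, plus zero-weight level-advancing edges `((v,i),(v,i+1))`. -/
def layerEdges {V : Type*} (E : ℕ → Set (V × V)) : Set ((V × ℕ) × (V × ℕ)) :=
  {p | (p.1.2 = p.2.2 ∧ (p.1.1, p.2.1) ∈ E p.1.2) ∨ (p.1.1 = p.2.1 ∧ p.2.2 = p.1.2 + 1)}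

/-- Weights in the layered graph: level edges keep their weight, level-advancing
edges are free. -/
def layerWeight {V : Type*} (w : V × V → ℝ) (p : (V × ℕ) × (V × ℕ)) : ℝ :=
  if p.1.2 = p.2.2 then w (p.1.1, p.2.1) else 0

/-- if a Monotonic Single-Source k-DTSN instance (root `a`, demands
`(a, b i, t i)`) has a feasible solution of cost `C`, then the layered Directed
Steiner Tree instance (demands `(a^0, (b i)^{t i})`) has a feasible solution of
cost at most `C`. -/
theorem stmt5 {V : Type*} [DecidableEq V] {k : ℕ}
    (E : ℕ → Set (V × V)) (hmono : Monotone E)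
    (w : V × V → ℝ) (hw : ∀ e, 0 ≤ w e)
    (a : V) (b : Fin k → V) (t : Fin k → ℕ) (ht : Monotone t)
    (H : Finset (V × V))
    (hfeas : ∀ i, Relation.ReflTransGen
      (fun u v => (u, v) ∈ H ∧ (u, v) ∈ E (t i)) a (b i)) :
    ∃ H' : Finset ((V × ℕ) × (V × ℕ)),
      (↑H' ⊆ layerEdges E) ∧
      (∀ i, Relation.ReflTransGen (fun x y => (x, y) ∈ H') (a, 0) (b i, t i)) ∧
      (∑ e ∈ H', layerWeight w e) ≤ ∑ e ∈ H, w e := by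
  classical
  set R : ℕ → V → Prop := fun n v =>
    Relation.ReflTransGen (fun u v => (u, v) ∈ H ∧ (u, v) ∈ E n) a v with hRdef
  set r : V → ℕ := fun v => if h : ∃ n, R n v then Nat.find h else 0 with hrdef
  have rspec : ∀ {n v}, R n v → r v ≤ n ∧ R (r v) v := by
    intro n v h
    have hex : ∃ n, R n v := ⟨n, h⟩
    simp only [hrdef, dif_pos hex]
    exact ⟨Nat.find_le h, Nat.find_spec hex⟩
  set N : ℕ := Finset.univ.sup t with hNdef
  set A : Finset V := insert a (H.image Prod.fst ∪ H.image Prod.snd) with hAdef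
  set C : V × V → Prop := fun e =>
    (∃ n, R n e.2) ∧ (e.1, e.2) ∈ E (r e.2) ∧ R (r e.2) e.1 with hCdef
  set f : V × V → (V × ℕ) × (V × ℕ) := fun e => ((e.1, r e.2), (e.2, r e.2)) with hfdef
  set Lvl : Finset ((V × ℕ) × (V × ℕ)) := (H.filter C).image f with hLvl
  set Adv : Finset ((V × ℕ) × (V × ℕ)) :=
    (A ×ˢ Finset.range N).image (fun p => ((p.1, p.2), (p.1, p.2 + 1))) with hAdv
  refine ⟨Lvl ∪ Adv, ?_, ?_, ?_⟩
  · -- subset of layerEdges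
    intro p hp
    rcases Finset.mem_union.mp hp with hp | hp
    · obtain ⟨e, he, rfl⟩ := Finset.mem_image.mp hp
      obtain ⟨heH, hCe⟩ := Finset.mem_filter.mp he
      exact Or.inl ⟨rfl, hCe.2.1⟩
    · obtain ⟨q, hq, rfl⟩ := Finset.mem_image.mp hp
      exact Or.inr ⟨rfl, rfl⟩
  · -- connectivity
    have adv : ∀ v ∈ A, ∀ m m' : ℕ, m ≤ m' → m' ≤ N →
        Relation.ReflTransGen (fun x y => (x, y) ∈ Lvl ∪ Adv) (v, m) (v, m') := by
      intro v hv m m' hmm'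
      induction m' , hmm' using Nat.le_induction with
      | base => intro _; exact Relation.ReflTransGen.refl
      | succ j hmj ih =>
        intro hjN
        refine Relation.ReflTransGen.tail (ih (by omega)) ?_
        refine Finset.mem_union_right _ (Finset.mem_image.mpr ⟨(v, j), ?_, rfl⟩)
        exact Finset.mem_product.mpr ⟨hv, Finset.mem_range.mpr (by omega)⟩
    have main : ∀ n, n ≤ N → ∀ v, R n v →
        Relation.ReflTransGen (fun x y => (x, y) ∈ Lvl ∪ Adv) (a, 0) (v, n) := by
      intro n
      induction n using Nat.strong_induction_on with
      | _ n ihn =>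
        intro hnN v hv
        induction hv with
        | refl =>
          exact adv a (Finset.mem_insert_self _ _) 0 n (Nat.zero_le _) hnN
        | tail hpath hedge ih2 =>
          rename_i u v'
          have hRv' : R n v' := Relation.ReflTransGen.tail hpath hedge
          obtain ⟨hrle, hrR⟩ := rspec hRv'
          by_cases hcase : r v' = n
          · refine Relation.ReflTransGen.tail ih2 ?_
            refine Finset.mem_union_left _ (Finset.mem_image.mpr ⟨(u, v'), ?_, ?_⟩)
            · refine Finset.mem_filter.mpr ⟨hedge.1, ⟨n, hRv'⟩, ?_, ?_⟩
              · rw [hcase]; exact hedge.2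
              · rw [hcase]; exact hpath
            · simp only [hfdef, hcase]
          · have hlt : r v' < n := lt_of_le_of_ne hrle hcase
            have h1 := ihn (r v') hlt (le_trans hrle hnN) v' hrR
            have hv'A : v' ∈ A := by
              refine Finset.mem_insert_of_mem (Finset.mem_union_right _ ?_)
              exact Finset.mem_image.mpr ⟨(u, v'), hedge.1, rfl⟩
            exact h1.trans (adv v' hv'A (r v') n hrle hnN)
    intro i
    exact main (t i) (Finset.le_sup (Finset.mem_univ i)) (b i) (hfeas i)
  · -- cost
    have hdisj : Disjoint Lvl Adv := by
      rw [Finset.disjoint_left]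
      intro p hpL hpA
      obtain ⟨e, _, rfl⟩ := Finset.mem_image.mp hpL
      obtain ⟨q, _, hq⟩ := Finset.mem_image.mp hpA
      have h1 : q.2 = r e.2 := congrArg (fun p => p.1.2) hq
      have h2 : q.2 + 1 = r e.2 := congrArg (fun p => p.2.2) hq
      omega
    rw [Finset.sum_union hdisj]
    have hAdv0 : ∑ e ∈ Adv, layerWeight w e = 0 := by
      refine Finset.sum_eq_zero fun p hp => ?_
      obtain ⟨q, _, rfl⟩ := Finset.mem_image.mp hp
      simp [layerWeight]
    rw [hAdv0, add_zero]
    have hinj : ∀ x ∈ H.filter C, ∀ y ∈ H.filter C, f x = f y → x = y := by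
      intro x _ y _ hxy
      have h1 : x.1 = y.1 := congrArg (fun p => p.1.1) hxy
      have h2 : x.2 = y.2 := congrArg (fun p => p.2.1) hxy
      exact Prod.ext h1 h2
    rw [hLvl, Finset.sum_image hinj]
    have : ∀ e ∈ H.filter C, layerWeight w (f e) = w e := by
      intro e _
      simp [layerWeight, hfdef]
    rw [Finset.sum_congr rfl this]
    exact Finset.sum_le_sum_of_subset_of_nonneg (Finset.filter_subset _ _)
      (fun e _ _ => hw e)
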